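/- Let G on vertex set V be the disjoint union of spanning arborescences (colors) A_1,...,A_k, let B̃ be an inclusion-wise maximal rainbow arborescence in G with vertex set Ṽ ⊊ V, and let i be a color with B̃ ∩ A_i = ∅. Then the root of A_i lies in V ∖ Ṽ, and the restriction of A_i to V ∖ Ṽ is an arborescence on V ∖ Ṽ. -/

import Mathlib

open Finset

variable {V : Type*}

/-- `A` is the arc set of an arborescence on vertex set `U` rooted at `r`:
all arcs lie within `U`, the root has no incoming arc, every other vertex of `U`
has exactly one incoming arc, and every vertex of `U` is reachable from `r`. -/
def IsArborOn [DecidableEq V] (U : Finset V) (A : Finset (V × V)) (r : V) : Prop :=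
  r ∈ U ∧ (∀ e ∈ A, e.1 ∈ U ∧ e.2 ∈ U) ∧ (∀ e ∈ A, e.2 ≠ r) ∧
  (∀ v ∈ U, v ≠ r → (A.filter (fun e => e.2 = v)).card = 1) ∧
  (∀ v ∈ U, Relation.ReflTransGen (fun a b => (a, b) ∈ A) r v)

/-- A spanning arborescence on the whole (finite) vertex type. -/
def IsSpanningArbor [Fintype V] [DecidableEq V] (A : Finset (V × V)) (r : V) : Prop :=
  IsArborOn Finset.univ A r

/-- `B` is rainbow w.r.t. the colored arc sets `A 0, …, A (k-1)`:
each arc of `B` can be assigned a color whose class contains it, with all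
assigned colors distinct (i.e. at most one arc from each color). -/
def IsRainbowOf {k : ℕ} (A : Fin k → Finset (V × V)) (B : Finset (V × V)) : Prop :=
  ∃ c : V × V → Fin k, Set.InjOn c ↑B ∧ ∀ e ∈ B, e ∈ A (c e)

theorem stmt17 [Fintype V] [DecidableEq V]
    (k : ℕ) (A : Fin k → Finset (V × V)) (r : Fin k → V)
    (hA : ∀ i, IsSpanningArbor (A i) (r i))
    (Bt : Finset (V × V)) (Vt : Finset V) (rt : V)
    (hBt : IsArborOn Vt Bt rt) (hrb : IsRainbowOf A Bt)
    (hmax : ∀ (B' : Finset (V × V)) (U' : Finset V) (r' : V),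
      IsRainbowOf A B' → IsArborOn U' B' r' → Bt ⊆ B' → B' = Bt)
    (hVt : Vt ≠ Finset.univ)
    (i : Fin k) (hi : Disjoint Bt (A i)) :
    r i ∉ Vt ∧
    IsArborOn (Finset.univ \ Vt)
      ((A i).filter (fun e => e.1 ∉ Vt ∧ e.2 ∉ Vt)) (r i) := by
  obtain ⟨c, hcinj, hcmem⟩ := hrb
  obtain ⟨hrtVt, hBtin, hBtroot, hBtcount, hBtreach⟩ := hBt
  obtain ⟨hriU, hAin, hAroot, hAcount, hAreach⟩ := hA i
  have hdisj : ∀ e ∈ Bt, e ∉ A i := fun e he => Finset.disjoint_left.mp hi he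
  -- Key property from maximality: arcs of A i do not leave Vt
  have P : ∀ u v : V, (u, v) ∈ A i → u ∈ Vt → v ∈ Vt := by
    intro u v huv huVt
    by_contra hv
    set B' : Finset (V × V) := insert (u, v) Bt with hB'
    have hrb' : IsRainbowOf A B' := by
      refine ⟨fun e => if e = (u, v) then i else c e, ?_, ?_⟩
      · intro e1 he1 e2 he2 heq
        simp only [hB', coe_insert, Set.mem_insert_iff, mem_coe] at he1 he2
        rcases he1 with h1 | h1 <;> rcases he2 with h2 | h2
        · rw [h1, h2]
        · exfalso
          have hne : e2 ≠ (u, v) := by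
            rintro rfl; exact hv (hBtin _ h2).2
          simp only [h1, if_pos rfl, if_neg hne] at heq
          have := hcmem e2 h2
          rw [← heq] at this
          exact hdisj e2 h2 this
        · exfalso
          have hne : e1 ≠ (u, v) := by
            rintro rfl; exact hv (hBtin _ h1).2
          simp only [h2, if_pos rfl, if_neg hne] at heq
          have := hcmem e1 h1
          rw [heq] at this
          exact hdisj e1 h1 this
        · have hne1 : e1 ≠ (u, v) := by rintro rfl; exact hv (hBtin _ h1).2
          have hne2 : e2 ≠ (u, v) := by rintro rfl; exact hv (hBtin _ h2).2
          simp only [if_neg hne1, if_neg hne2] at heq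
          exact hcinj h1 h2 heq
      · intro e he
        rcases Finset.mem_insert.mp he with rfl | he'
        · simp [huv]
        · have hne : e ≠ (u, v) := by rintro rfl; exact hv (hBtin _ he').2
          simpa [hne] using hcmem e he'
    have harb : IsArborOn (insert v Vt) B' rt := by
      refine ⟨Finset.mem_insert_of_mem hrtVt, ?_, ?_, ?_, ?_⟩
      · intro e he
        rcases Finset.mem_insert.mp he with rfl | he'
        · exact ⟨Finset.mem_insert_of_mem huVt, Finset.mem_insert_self _ _⟩
        · exact ⟨Finset.mem_insert_of_mem (hBtin e he').1,
            Finset.mem_insert_of_mem (hBtin e he').2⟩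
      · intro e he
        rcases Finset.mem_insert.mp he with rfl | he'
        · intro h
          have hvr : v = rt := h
          exact hv (hvr ▸ hrtVt)
        · exact hBtroot e he'
      · intro w hw hwne
        rcases Finset.mem_insert.mp hw with rfl | hw'
        · have : B'.filter (fun e => e.2 = w) = {(u, w)} := by
            ext e
            simp only [hB', Finset.mem_filter, Finset.mem_insert, Finset.mem_singleton]
            constructor
            · rintro ⟨rfl | he', h2⟩
              · rfl
              · exact absurd (h2 ▸ (hBtin e he').2) hv
            · rintro rfl; exact ⟨Or.inl rfl, rfl⟩
          rw [this, Finset.card_singleton]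
        · have hvw : v ≠ w := fun h => hv (h ▸ hw')
          have : B'.filter (fun e => e.2 = w) = Bt.filter (fun e => e.2 = w) := by
            rw [hB', Finset.filter_insert, if_neg hvw]
          rw [this]
          exact hBtcount w hw' hwne
      · intro w hw
        have mono : ∀ a b : V, (a, b) ∈ Bt → (a, b) ∈ B' :=
          fun a b h => Finset.mem_insert_of_mem h
        rcases Finset.mem_insert.mp hw with rfl | hw'
        · exact (Relation.ReflTransGen.mono mono _ _ (hBtreach u huVt)).tail (Finset.mem_insert_self _ _)
        · exact Relation.ReflTransGen.mono mono _ _ (hBtreach w hw')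
    have hBB : B' = Bt := hmax B' (insert v Vt) rt hrb' harb (Finset.subset_insert _ _)
    exact hv (hBtin (u, v) (hBB ▸ Finset.mem_insert_self _ _)).2
  -- Root of A i is outside Vt
  have hroot : r i ∉ Vt := by
    intro hr
    apply hVt
    apply Finset.eq_univ_iff_forall.mpr
    intro v
    have reach := hAreach v (Finset.mem_univ v)
    induction reach with
    | refl => exact hr
    | @tail b w hab hbc ih => exact P b w hbc ih
  refine ⟨hroot, ?_, ?_, ?_, ?_, ?_⟩
  · exact Finset.mem_sdiff.mpr ⟨Finset.mem_univ _, hroot⟩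
  · intro e he
    have := Finset.mem_filter.mp he
    exact ⟨Finset.mem_sdiff.mpr ⟨Finset.mem_univ _, this.2.1⟩,
      Finset.mem_sdiff.mpr ⟨Finset.mem_univ _, this.2.2⟩⟩
  · intro e he
    exact hAroot e (Finset.mem_filter.mp he).1
  · intro v hv hvne
    have hvVt : v ∉ Vt := (Finset.mem_sdiff.mp hv).2
    obtain ⟨a, ha⟩ := Finset.card_eq_one.mp (hAcount v (Finset.mem_univ v) hvne)
    have haA : a ∈ A i ∧ a.2 = v := by
      have : a ∈ (A i).filter (fun e => e.2 = v) := ha ▸ Finset.mem_singleton_self a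
      exact Finset.mem_filter.mp this
    have ha1 : a.1 ∉ Vt := by
      intro h1
      exact hvVt (haA.2 ▸ P a.1 a.2 (by rw [Prod.mk.eta]; exact haA.1) h1)
    have : ((A i).filter (fun e => e.1 ∉ Vt ∧ e.2 ∉ Vt)).filter (fun e => e.2 = v) = {a} := by
      ext e
      simp only [Finset.mem_filter, Finset.mem_singleton]
      constructor
      · rintro ⟨⟨heA, -, -⟩, h2⟩
        have : e ∈ (A i).filter (fun e => e.2 = v) := Finset.mem_filter.mpr ⟨heA, h2⟩
        rwa [ha, Finset.mem_singleton] at this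
      · rintro rfl
        exact ⟨⟨haA.1, ha1, haA.2 ▸ hvVt⟩, haA.2⟩
    rw [this, Finset.card_singleton]
  · intro v hv
    have hvVt : v ∉ Vt := (Finset.mem_sdiff.mp hv).2
    have key : ∀ w, Relation.ReflTransGen (fun a b => (a, b) ∈ A i) (r i) w → w ∉ Vt →
        Relation.ReflTransGen
          (fun a b => (a, b) ∈ (A i).filter (fun e => e.1 ∉ Vt ∧ e.2 ∉ Vt)) (r i) w := by
      intro w h
      induction h with
      | refl => exact fun _ => Relation.ReflTransGen.refl
      | @tail b w hab hbc ih =>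
        intro hw
        have hb : b ∉ Vt := fun hbin => hw (P b w hbc hbin)
        exact (ih hb).tail (Finset.mem_filter.mpr ⟨hbc, hb, hw⟩)
    exact key v (hAreach v (Finset.mem_univ v)) hvVt
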